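/- Let $\tau$ be a real random variable whose distribution has a Lebesgue density on $\mathbb{R}$. Then as $\varepsilon \downarrow 0$, the fractional part $\{\tau/\varepsilon\}$ converges in distribution to a uniform random variable on $(0,1)$. -/

import Mathlib

open MeasureTheory Filter Topology

namespace Kosu

/-- The periodized test function. -/
noncomputable def h (f : BoundedContinuousFunction ℝ ℝ) (x : ℝ) : ℝ := f (Int.fract x)

variable (f : BoundedContinuousFunction ℝ ℝ)

lemma h_meas : Measurable (h f) := f.continuous.measurable.comp measurable_fract

lemma h_bound (x : ℝ) : ‖h f x‖ ≤ ‖f‖ := f.norm_coe_le_norm _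

lemma h_per : Function.Periodic (h f) 1 := fun x => by
  simp [h, Int.fract_add_one]

/-- The mean of `h f` over one period. -/
noncomputable def hbar : ℝ := ∫ x in (0:ℝ)..1, h f x

lemma hbar_bound : ‖hbar f‖ ≤ ‖f‖ := by
  have := intervalIntegral.norm_integral_le_of_norm_le_const
    (a := (0:ℝ)) (b := 1) (C := ‖f‖) (f := h f) (fun x _ => h_bound f x)
  simpa [hbar] using this

lemma hbar_eq : hbar f = ∫ x in Set.Ioo (0:ℝ) 1, f x := by
  rw [hbar, intervalIntegral.integral_of_le zero_le_one, integral_Ioc_eq_integral_Ioo]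
  refine setIntegral_congr_fun measurableSet_Ioo (fun x hx => ?_)
  simp [h, Int.fract_eq_self.2 ⟨hx.1.le, hx.2⟩]

lemma h_interval (c : ℝ) : ∫ v in Set.Ioc (0:ℝ) 1, h f (c + v) = hbar f := by
  rw [← intervalIntegral.integral_of_le zero_le_one,
    intervalIntegral.integral_comp_add_left (h f) c]
  simpa [hbar] using (h_per f).intervalIntegral_add_eq c 0

lemma integrable_mul {φ : ℝ → ℝ} (hφ : Integrable φ volume) (ε v : ℝ) :
    Integrable (fun x => φ x * h f (x / ε + v)) volume := by
  refine (hφ.norm.mul_const ‖f‖).mono' ?_ (Filter.Eventually.of_forall fun x => ?_)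
  · exact hφ.aestronglyMeasurable.mul
      (((h_meas f).comp ((measurable_id.div_const ε).add_const v)).aestronglyMeasurable)
  · rw [norm_mul]
    exact mul_le_mul_of_nonneg_left (h_bound f _) (norm_nonneg _)

/-- Main estimate for continuous compactly supported densities. -/
lemma cc_bound (φ : ℝ → ℝ) (hc : Continuous φ) (hsupp : HasCompactSupport φ)
    {δ : ℝ} (hδ : 0 < δ) :
    ∃ ε₀ > (0:ℝ), ∀ ε : ℝ, 0 < ε → ε ≤ ε₀ →
      ‖(∫ x, φ x * h f (x / ε)) - (∫ x, φ x) * hbar f‖ ≤ δ := by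
  classical
  obtain ⟨R₀, hR₀⟩ := hsupp.isBounded.subset_closedBall 0
  set R : ℝ := max R₀ 0 with hRdef
  have hR0 : 0 ≤ R := le_max_right _ _
  have hRsupp : tsupport φ ⊆ Set.Icc (-R) R := by
    refine hR₀.trans fun x hx => ?_
    rw [Real.closedBall_eq_Icc] at hx
    have h1 : R₀ ≤ R := le_max_left _ _
    exact ⟨by linarith [hx.1], by linarith [hx.2]⟩
  have hφint : Integrable φ volume := hc.integrable_of_hasCompactSupport hsupp
  have hK : (0:ℝ) < (‖f‖ + 1) * (2 * R + 3) := by positivity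
  set δ' : ℝ := δ / ((‖f‖ + 1) * (2 * R + 3)) with hδ'def
  have hδ' : 0 < δ' := div_pos hδ hK
  obtain ⟨η, hη, hmod⟩ := Metric.uniformContinuous_iff.1
    (hsupp.uniformContinuous_of_continuous hc) δ' hδ'
  refine ⟨min (η / 2) 1, lt_min (by linarith) one_pos, fun ε hε hεle => ?_⟩
  have hεη : ε < η := lt_of_le_of_lt (hεle.trans (min_le_left _ _)) (by linarith)
  have hε1 : ε ≤ 1 := hεle.trans (min_le_right _ _)
  set ν : Measure ℝ := volume.restrict (Set.Ioc (0:ℝ) 1) with hνdef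
  haveI : IsFiniteMeasure ν := by
    constructor
    rw [hνdef, Measure.restrict_apply_univ, Real.volume_Ioc]
    simp
  have hνuniv : ν Set.univ = 1 := by
    rw [hνdef, Measure.restrict_apply_univ, Real.volume_Ioc]; norm_num
  set F : ℝ → ℝ := fun y => φ y * h f (y / ε) with hFdef
  set A : ℝ := ∫ x, F x with hAdef
  have hFint : Integrable F volume := by
    simpa [hFdef] using integrable_mul f hφint ε 0
  -- Fact 1 : translation invariance
  have fact1 : ∀ v : ℝ, ∫ x, φ (x + ε * v) * h f (x / ε + v) = A := by
    intro v
    have hfun : (fun x => φ (x + ε * v) * h f (x / ε + v)) = fun x => F (x + ε * v) := by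
      funext x
      have : (x + ε * v) / ε = x / ε + v := by field_simp
      rw [hFdef]; simp only [this]
    rw [hfun, hAdef]
    exact integral_add_right_eq_self F (ε * v)
  -- measurability of the product integrand
  have Gm : Measurable (Function.uncurry fun x v => φ x * h f (x / ε + v)) := by
    exact (hc.measurable.comp measurable_fst).mul
      ((h_meas f).comp ((measurable_fst.div_const ε).add measurable_snd))
  -- product integrability
  have prodInt : Integrable (Function.uncurry fun x v => φ x * h f (x / ε + v))
      (volume.prod ν) := by
    refine ((hφint.norm.mul_prod (integrable_const (‖f‖) (μ := ν))).mono'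
      Gm.aestronglyMeasurable (Filter.Eventually.of_forall fun z => ?_))
    simp only [Function.uncurry, norm_mul]
    exact mul_le_mul_of_nonneg_left (h_bound f _) (norm_nonneg _)
  -- Fact 2 : Fubini
  have fact2 : ∫ v, (∫ x, φ x * h f (x / ε + v)) ∂ν = (∫ x, φ x) * hbar f := by
    rw [← MeasureTheory.integral_integral_swap prodInt]
    have : ∀ x : ℝ, (∫ v, φ x * h f (x / ε + v) ∂ν) = φ x * hbar f := by
      intro x
      rw [integral_const_mul, h_interval]
    simp_rw [this]
    rw [integral_mul_const]
  have G2int : Integrable (fun v => ∫ x, φ x * h f (x / ε + v)) ν := by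
    have := prodInt.integral_prod_right
    simpa [Function.uncurry] using this
  -- Pointwise identity
  have ptwise : ∀ v : ℝ, A - (∫ x, φ x * h f (x / ε + v))
      = ∫ x, (φ (x + ε * v) - φ x) * h f (x / ε + v) := by
    intro v
    have h1 : Integrable (fun x => φ (x + ε * v) * h f (x / ε + v)) volume := by
      have hfun : (fun x => φ (x + ε * v) * h f (x / ε + v)) = fun x => F (x + ε * v) := by
        funext x
        have : (x + ε * v) / ε = x / ε + v := by field_simp
        rw [hFdef]; simp only [this]
      rw [hfun]
      exact hFint.comp_add_right (ε * v)
    have h2 : Integrable (fun x => φ x * h f (x / ε + v)) volume := integrable_mul f hφint ε v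
    have : ∫ x, (φ (x + ε * v) - φ x) * h f (x / ε + v)
        = (∫ x, φ (x + ε * v) * h f (x / ε + v)) - ∫ x, φ x * h f (x / ε + v) := by
      simp_rw [sub_mul]
      exact integral_sub h1 h2
    rw [this, fact1]
  -- Pointwise bound
  have ptbound : ∀ v ∈ Set.Ioc (0:ℝ) 1,
      ‖A - (∫ x, φ x * h f (x / ε + v))‖ ≤ δ' * ‖f‖ * (2 * R + 2) := by
    intro v hv
    rw [ptwise v]
    have hεv0 : 0 < ε * v := mul_pos hε hv.1
    have hεv1 : ε * v ≤ 1 := by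
      calc ε * v ≤ ε * 1 := by nlinarith [hv.2]
        _ ≤ 1 := by linarith
    set s : Set ℝ := Set.Icc (-R - 1) (R + 1) with hsdef
    have hzero : ∀ x : ℝ, x ∉ s →
        (φ (x + ε * v) - φ x) * h f (x / ε + v) = 0 := by
      intro x hx
      have hx' : x < -R - 1 ∨ R + 1 < x := by
        rcases lt_or_ge x (-R - 1) with hlt | hge
        · exact Or.inl hlt
        · refine Or.inr ?_
          by_contra hcon
          exact hx ⟨hge, le_of_not_gt hcon⟩
      have hφx : φ x = 0 := by
        apply image_eq_zero_of_notMem_tsupport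
        intro hmem
        have := hRsupp hmem
        rcases hx' with hlt | hgt
        · exact absurd this.1 (by linarith)
        · exact absurd this.2 (by linarith)
      have hφx' : φ (x + ε * v) = 0 := by
        apply image_eq_zero_of_notMem_tsupport
        intro hmem
        have := hRsupp hmem
        rcases hx' with hlt | hgt
        · have : -R ≤ x + ε * v := this.1
          linarith
        · have : x + ε * v ≤ R := this.2
          linarith
      rw [hφx, hφx', sub_zero, zero_mul]
    rw [← setIntegral_eq_integral_of_forall_compl_eq_zero hzero]
    have hsfin : volume s < ⊤ := by
      rw [hsdef]; exact measure_Icc_lt_top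
    have hCle : ∀ x ∈ s, ‖(φ (x + ε * v) - φ x) * h f (x / ε + v)‖ ≤ δ' * ‖f‖ := by
      intro x _
      rw [norm_mul]
      have h1 : ‖φ (x + ε * v) - φ x‖ ≤ δ' := by
        have : dist (x + ε * v) x < η := by
          rw [Real.dist_eq]
          have : |x + ε * v - x| = ε * v := by
            rw [add_sub_cancel_left, abs_of_pos hεv0]
          rw [this]
          nlinarith [hv.2, hε.le]
        have := hmod this
        rw [Real.dist_eq] at this
        exact le_of_lt this
      exact mul_le_mul h1 (h_bound f _) (norm_nonneg _) hδ'.le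
    have hmeas' : AEStronglyMeasurable
        (fun x => (φ (x + ε * v) - φ x) * h f (x / ε + v)) (volume.restrict s) := by
      refine AEStronglyMeasurable.mul ?_ ?_
      · exact ((hc.measurable.comp (measurable_id.add_const (ε * v))).sub
          hc.measurable).aestronglyMeasurable
      · exact ((h_meas f).comp ((measurable_id.div_const ε).add_const v)).aestronglyMeasurable
    refine (norm_setIntegral_le_of_norm_le_const (μ := volume) hsfin hCle).trans ?_
    have hsm : (volume s).toReal = 2 * R + 2 := by
      rw [hsdef, Real.volume_Icc]
      rw [ENNReal.toReal_ofReal (by linarith)]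
      ring
    rw [measureReal_def, hsm]
  -- Put things together
  have key : A - (∫ x, φ x) * hbar f
      = ∫ v, (A - (∫ x, φ x * h f (x / ε + v))) ∂ν := by
    rw [integral_sub (integrable_const A) G2int, fact2, integral_const, measureReal_def, hνuniv]
    simp
  have : ‖A - (∫ x, φ x) * hbar f‖ ≤ δ' * ‖f‖ * (2 * R + 2) * (ν Set.univ).toReal := by
    rw [key]
    have : ν = volume.restrict (Set.Ioc (0:ℝ) 1) := hνdef
    rw [this]
    refine (norm_setIntegral_le_of_norm_le_const (μ := volume)
      (C := δ' * ‖f‖ * (2 * R + 2)) ?_ ?_).trans ?_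
    · rw [Real.volume_Ioc]; simp
    · intro v hv
      exact ptbound v hv
    · simp [Real.volume_Ioc]
  rw [hνuniv] at this
  simp only [ENNReal.toReal_one, mul_one] at this
  refine this.trans ?_
  have h1 : δ' * ‖f‖ * (2 * R + 2) ≤ δ' * ((‖f‖ + 1) * (2 * R + 3)) := by
    nlinarith [hδ'.le, norm_nonneg f, hR0]
  refine h1.trans ?_
  rw [hδ'def, div_mul_cancel₀ _ hK.ne']

/-- The approximation step: convergence for an integrable density. -/
lemma main_tendsto {g : ℝ → ℝ} (hg : Integrable g volume) :
    Tendsto (fun ε : ℝ => ∫ x, g x * h f (x / ε)) (𝓝[>] (0:ℝ))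
      (𝓝 ((∫ x, g x) * hbar f)) := by
  rw [Metric.tendsto_nhdsWithin_nhds]
  intro δ hδ
  have hK : (0:ℝ) < ‖f‖ + 1 := by positivity
  set δ₁ : ℝ := δ / (4 * (‖f‖ + 1)) with hδ₁def
  have hδ₁ : 0 < δ₁ := by positivity
  obtain ⟨φ, hφsupp, hφapprox, hφcont, hφint⟩ :=
    hg.exists_hasCompactSupport_integral_sub_le hδ₁
  obtain ⟨ε₀, hε₀, hccb⟩ := cc_bound f φ hφcont hφsupp (show (0:ℝ) < δ / 4 by positivity)
  refine ⟨ε₀, hε₀, fun {ε} hεmem hεdist => ?_⟩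
  have hε : 0 < ε := hεmem
  have hεle : ε ≤ ε₀ := by
    rw [Real.dist_eq] at hεdist
    have : |ε - 0| = ε := by rw [sub_zero, abs_of_pos hε]
    rw [this] at hεdist
    exact hεdist.le
  rw [Real.dist_eq]
  have hgφint : Integrable (fun x => g x - φ x) volume := hg.sub hφint
  -- first piece
  have p1 : ‖(∫ x, g x * h f (x / ε)) - ∫ x, φ x * h f (x / ε)‖ ≤ δ₁ * ‖f‖ := by
    have hsub : (∫ x, g x * h f (x / ε)) - (∫ x, φ x * h f (x / ε))
        = ∫ x, (g x - φ x) * h f (x / ε) := by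
      rw [← integral_sub]
      · simp_rw [sub_mul]
      · simpa using integrable_mul f hg ε 0
      · simpa using integrable_mul f hφint ε 0
    rw [hsub]
    have := norm_integral_le_integral_norm (fun x => (g x - φ x) * h f (x / ε)) (μ := volume)
    refine this.trans ?_
    have hb : ∀ x : ℝ, ‖(g x - φ x) * h f (x / ε)‖ ≤ ‖g x - φ x‖ * ‖f‖ := by
      intro x
      rw [norm_mul]
      exact mul_le_mul_of_nonneg_left (h_bound f _) (norm_nonneg _)
    have hint1 : Integrable (fun x => ‖(g x - φ x) * h f (x / ε)‖) volume := by
      simpa using (integrable_mul f hgφint ε 0 |>.norm)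
    have hint2 : Integrable (fun x => ‖g x - φ x‖ * ‖f‖) volume :=
      hgφint.norm.mul_const _
    have := integral_mono hint1 hint2 hb
    refine this.trans ?_
    rw [integral_mul_const]
    exact mul_le_mul_of_nonneg_right hφapprox (norm_nonneg f)
  -- third piece
  have p3 : ‖(∫ x, φ x) * hbar f - (∫ x, g x) * hbar f‖ ≤ δ₁ * ‖f‖ := by
    rw [← sub_mul, norm_mul]
    have h1 : ‖(∫ x, φ x) - ∫ x, g x‖ ≤ δ₁ := by
      rw [← integral_sub hφint hg]
      refine (norm_integral_le_integral_norm _).trans ?_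
      refine le_trans (le_of_eq ?_) hφapprox
      congr 1
      funext x
      rw [norm_sub_rev]
    exact mul_le_mul h1 (hbar_bound f) (norm_nonneg _) hδ₁.le
  have p2 := hccb ε hε hεle
  have hδ₁f : δ₁ * ‖f‖ ≤ δ / 4 := by
    rw [hδ₁def]
    rw [div_mul_eq_mul_div, div_le_div_iff₀ (by positivity) (by positivity)]
    nlinarith [norm_nonneg f, hδ.le]
  set a := ∫ x, g x * h f (x / ε) with ha
  set b := ∫ x, φ x * h f (x / ε) with hb
  set c := (∫ x, φ x) * hbar f with hc'
  set d := (∫ x, g x) * hbar f with hd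
  have e : a - d = (a - b) + (b - c) + (c - d) := by ring
  have htri : |a - d| ≤ ‖a - b‖ + ‖b - c‖ + ‖c - d‖ := by
    calc |a - d| = ‖(a - b) + (b - c) + (c - d)‖ := by rw [Real.norm_eq_abs, e]
      _ ≤ ‖a - b‖ + ‖b - c‖ + ‖c - d‖ := norm_add₃_le
  linarith [p1, p2, p3, hδ₁f, htri]

end Kosu
/-- Kosulajeff's theorem: if `τ` has a Lebesgue density, then the fractional
part `{τ/ε}` converges in distribution to a uniform random variable on `(0,1)`
as `ε ↓ 0`. -/
theorem fract_tendsto_uniform {Ω : Type*} [MeasurableSpace Ω]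
    (P : Measure Ω) [IsProbabilityMeasure P]
    (τ : Ω → ℝ) (hτ : Measurable τ)
    (hac : Measure.map τ P ≪ volume) :
    ∀ f : BoundedContinuousFunction ℝ ℝ,
      Tendsto (fun ε : ℝ => ∫ ω, f (Int.fract (τ ω / ε)) ∂P) (𝓝[>] (0:ℝ))
        (𝓝 (∫ x in Set.Ioo (0:ℝ) 1, f x)) := by
  intro f
  set μ : Measure ℝ := Measure.map τ P with hμdef
  haveI : IsProbabilityMeasure μ := Measure.isProbabilityMeasure_map hτ.aemeasurable
  set g : ℝ → ℝ := fun x => (μ.rnDeriv volume x).toReal with hgdef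
  have hgint : Integrable g volume := Measure.integrable_toReal_rnDeriv
  have hgone : ∫ x, g x = 1 := by
    rw [hgdef]
    rw [Measure.integral_toReal_rnDeriv hac]
    simp
  have heq : ∀ ε : ℝ, (∫ ω, f (Int.fract (τ ω / ε)) ∂P)
      = ∫ x, g x * Kosu.h f (x / ε) := by
    intro ε
    have h1 : (∫ ω, f (Int.fract (τ ω / ε)) ∂P) = ∫ x, Kosu.h f (x / ε) ∂μ := by
      rw [hμdef]
      rw [integral_map hτ.aemeasurable]
      · rfl
      · exact ((Kosu.h_meas f).comp (measurable_id.div_const ε)).aestronglyMeasurable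
    rw [h1, ← integral_rnDeriv_smul hac]
    simp [hgdef, smul_eq_mul]
  have hmain := Kosu.main_tendsto f hgint
  rw [hgone, one_mul, Kosu.hbar_eq] at hmain
  refine hmain.congr fun ε => (heq ε).symm
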